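/- For a finite commutative ring R, let P_R denote the ratio (number of ideals of R) / (number of additive subgroups of (R, +)), as a rational number. Let n_1, m_1, n_2, m_2 be positive integers such that n_1 m_1 and n_2 m_2 are coprime. Then P_{ℤ_{n_1 n_2} × ℤ_{m_1 m_2}} = P_{ℤ_{n_1} × ℤ_{m_1}} · P_{ℤ_{n_2} × ℤ_{m_2}}. -/

import Mathlib

/-- The probability that a randomly chosen additive subgroup of a finite ring `R`
is an ideal: the number of ideals divided by the number of additive subgroups. -/
noncomputable def idealProb (R : Type*) [CommRing R] : ℚ :=
  (Nat.card (Ideal R) : ℚ) / (Nat.card (AddSubgroup R) : ℚ)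

section Aux

variable {A B : Type*} [AddGroup A] [AddGroup B]

lemma exists_nsmul_nsmul_eq [Finite A] {k : ℕ} (h : Nat.Coprime k (Nat.card A)) (a : A) :
    ∃ j : ℕ, j • (k • a) = a := by
  set n := Nat.card A with hn
  rcases eq_or_ne n 1 with h1 | h1
  · have : Subsingleton A := (Nat.card_eq_one_iff_unique.mp h1).1
    exact ⟨0, Subsingleton.elim _ _⟩
  · have h1 : 1 < n := lt_of_le_of_ne Nat.card_pos (Ne.symm h1)
    obtain ⟨m, -, hm⟩ := Nat.exists_mul_mod_eq_one_of_coprime h h1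
    refine ⟨m, ?_⟩
    have key : k * m = n * (k * m / n) + 1 := by
      conv_lhs => rw [← Nat.div_add_mod (k * m) n, hm]
    rw [← mul_nsmul a k m, key, add_nsmul, one_nsmul, mul_nsmul]
    simp [hn, card_nsmul_eq_zero']

lemma mem_of_mem_coprime_left [Finite A] [Finite B]
    (h : Nat.Coprime (Nat.card B) (Nat.card A)) (H : AddSubgroup (A × B)) {a : A} {b : B}
    (hab : (a, b) ∈ H) : (a, (0 : B)) ∈ H := by
  obtain ⟨j, hj⟩ := exists_nsmul_nsmul_eq h a
  have h2 : j • ((Nat.card B) • (a, b)) ∈ H :=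
    AddSubgroup.nsmul_mem H (AddSubgroup.nsmul_mem H hab _) _
  have : j • ((Nat.card B) • (a, b)) = (a, (0 : B)) := by
    simp only [Prod.smul_def, Prod.mk.injEq]
    exact ⟨hj, by simp [card_nsmul_eq_zero']⟩
  rwa [this] at h2

lemma mem_of_mem_coprime_right [Finite A] [Finite B]
    (h : Nat.Coprime (Nat.card A) (Nat.card B)) (H : AddSubgroup (A × B)) {a : A} {b : B}
    (hab : (a, b) ∈ H) : ((0 : A), b) ∈ H := by
  obtain ⟨j, hj⟩ := exists_nsmul_nsmul_eq h b
  have h2 : j • ((Nat.card A) • (a, b)) ∈ H :=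
    AddSubgroup.nsmul_mem H (AddSubgroup.nsmul_mem H hab _) _
  have : j • ((Nat.card A) • (a, b)) = ((0 : A), b) := by
    simp only [Prod.smul_def, Prod.mk.injEq]
    exact ⟨by simp [card_nsmul_eq_zero'], hj⟩
  rwa [this] at h2

lemma addSubgroup_eq_prod [Finite A] [Finite B]
    (h : Nat.Coprime (Nat.card A) (Nat.card B)) (H : AddSubgroup (A × B)) :
    H = (H.map (AddMonoidHom.fst A B)).prod (H.map (AddMonoidHom.snd A B)) := by
  ext ⟨a, b⟩
  simp only [AddSubgroup.mem_prod, AddSubgroup.mem_map, AddMonoidHom.coe_fst,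
    AddMonoidHom.coe_snd]
  constructor
  · intro hab
    exact ⟨⟨(a, b), hab, rfl⟩, ⟨(a, b), hab, rfl⟩⟩
  · rintro ⟨⟨⟨a', b'⟩, hm1, rfl⟩, ⟨⟨a'', b''⟩, hm2, rfl⟩⟩
    have h1 : ((a', b').1, (0 : B)) ∈ H := mem_of_mem_coprime_left h.symm H hm1
    have h2 : ((0 : A), (a'', b'').2) ∈ H := mem_of_mem_coprime_right h H hm2
    have := AddSubgroup.add_mem H h1 h2
    simpa using this

/-- For coprime finite groups, subgroups of the product correspond to pairs of subgroups. -/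
noncomputable def addSubgroupProdEquiv [Finite A] [Finite B]
    (h : Nat.Coprime (Nat.card A) (Nat.card B)) :
    AddSubgroup (A × B) ≃ AddSubgroup A × AddSubgroup B where
  toFun H := (H.map (AddMonoidHom.fst A B), H.map (AddMonoidHom.snd A B))
  invFun P := P.1.prod P.2
  left_inv H := (addSubgroup_eq_prod h H).symm
  right_inv := by
    rintro ⟨K, L⟩
    simp only [Prod.mk.injEq]
    constructor
    · ext a
      simp only [AddSubgroup.mem_map, AddMonoidHom.coe_fst]
      constructor
      · rintro ⟨⟨x, y⟩, hxy, rfl⟩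
        exact hxy.1
      · intro ha
        exact ⟨(a, 0), ⟨ha, L.zero_mem⟩, rfl⟩
    · ext b
      simp only [AddSubgroup.mem_map, AddMonoidHom.coe_snd]
      constructor
      · rintro ⟨⟨x, y⟩, hxy, rfl⟩
        exact hxy.2
      · intro hb
        exact ⟨(0, b), ⟨K.zero_mem, hb⟩, rfl⟩

/-- A ring equivalence induces an equivalence of ideal lattices. -/
noncomputable def idealEquivOfRingEquiv {R S : Type*} [CommRing R] [CommRing S] (e : R ≃+* S) :
    Ideal R ≃ Ideal S where
  toFun I := I.map (e : R →+* S)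
  invFun J := J.map (e.symm : S →+* R)
  left_inv I := by simp [Ideal.map_map]
  right_inv J := by simp [Ideal.map_map]

/-- An additive equivalence induces an equivalence of subgroup lattices. -/
noncomputable def addSubgroupEquivOfAddEquiv {M N : Type*} [AddGroup M] [AddGroup N]
    (e : M ≃+ N) : AddSubgroup M ≃ AddSubgroup N where
  toFun H := H.map (e : M →+ N)
  invFun K := K.map (e.symm : N →+ M)
  left_inv H := by simp [AddSubgroup.map_map]
  right_inv K := by simp [AddSubgroup.map_map]

lemma idealProb_congr {R S : Type*} [CommRing R] [CommRing S] (e : R ≃+* S) :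
    idealProb R = idealProb S := by
  unfold idealProb
  rw [Nat.card_congr (idealEquivOfRingEquiv e),
    Nat.card_congr (addSubgroupEquivOfAddEquiv e.toAddEquiv)]

lemma idealProb_prod (R S : Type*) [CommRing R] [CommRing S] [Finite R] [Finite S]
    (h : Nat.Coprime (Nat.card R) (Nat.card S)) :
    idealProb (R × S) = idealProb R * idealProb S := by
  unfold idealProb
  rw [Nat.card_congr Ideal.idealProdEquiv.toEquiv, Nat.card_congr (addSubgroupProdEquiv h),
    Nat.card_prod, Nat.card_prod, Nat.cast_mul, Nat.cast_mul, mul_div_mul_comm]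

end Aux

/-- If `n₁m₁` and `n₂m₂` are coprime, then
`P_{ℤ_{n₁n₂} × ℤ_{m₁m₂}} = P_{ℤ_{n₁} × ℤ_{m₁}} · P_{ℤ_{n₂} × ℤ_{m₂}}`. -/
theorem idealProb_mul (n₁ m₁ n₂ m₂ : ℕ) (hn₁ : 0 < n₁) (hm₁ : 0 < m₁)
    (hn₂ : 0 < n₂) (hm₂ : 0 < m₂) (hcop : Nat.Coprime (n₁ * m₁) (n₂ * m₂)) :
    idealProb (ZMod (n₁ * n₂) × ZMod (m₁ * m₂)) =
      idealProb (ZMod n₁ × ZMod m₁) * idealProb (ZMod n₂ × ZMod m₂) := by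
  haveI : NeZero n₁ := ⟨hn₁.ne'⟩
  haveI : NeZero m₁ := ⟨hm₁.ne'⟩
  haveI : NeZero n₂ := ⟨hn₂.ne'⟩
  haveI : NeZero m₂ := ⟨hm₂.ne'⟩
  have hnn : Nat.Coprime n₁ n₂ :=
    Nat.Coprime.coprime_dvd_right (Dvd.intro m₂ rfl) (Nat.Coprime.coprime_dvd_left (Dvd.intro m₁ rfl) hcop)
  have hmm : Nat.Coprime m₁ m₂ :=
    Nat.Coprime.coprime_dvd_right (Dvd.intro_left n₂ rfl) (Nat.Coprime.coprime_dvd_left (Dvd.intro_left n₁ rfl) hcop)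
  have e : ZMod (n₁ * n₂) × ZMod (m₁ * m₂) ≃+*
      (ZMod n₁ × ZMod m₁) × (ZMod n₂ × ZMod m₂) :=
    (RingEquiv.prodCongr (ZMod.chineseRemainder hnn) (ZMod.chineseRemainder hmm)).trans
      (RingEquiv.prodProdProdComm (ZMod n₁) (ZMod n₂) (ZMod m₁) (ZMod m₂))
  rw [idealProb_congr e]
  have hcard : Nat.Coprime (Nat.card (ZMod n₁ × ZMod m₁)) (Nat.card (ZMod n₂ × ZMod m₂)) := by
    rw [Nat.card_prod, Nat.card_prod, Nat.card_zmod, Nat.card_zmod, Nat.card_zmod, Nat.card_zmod]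
    exact hcop
  exact idealProb_prod _ _ hcard
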